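/- arXiv:1710.00408 — 3 statements merged into one kernel-verified Lean document; each statement's English description precedes it below -/
import Mathlib

section
/- Let n ≥ 2, N = 2n, and h = 1/n. Then R_{o,h} T_h^P E_{o,h} = T_h^D, i.e., restricting the periodic second-difference matrix through the odd extension yields the Dirichlet second-difference matrix. -/
open Matrix Finset

noncomputable section

/-- The tridiagonal matrix `tridiag(-1, 2, -1)` of size `m × m` (0-based indexing). -/
def tridiag (m : ℕ) : Matrix (Fin m) (Fin m) ℝ :=
  Matrix.of fun i j =>
    if (i : ℕ) = (j : ℕ) then 2
    else if (i : ℕ) + 1 = (j : ℕ) ∨ (j : ℕ) + 1 = (i : ℕ) then -1 else 0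

/-- The odd extension operator `E_{o,h} : ℝ^{n-1} → ℝ^{2n}`, sending the basis vector
`e_i^{n-1}` (math index `i = 1,…,n-1`) to `e_i^{2n} - e_{2n-i}^{2n}`.
In 0-based indexing, column `i` has entry `1` in row `i` and `-1` in row `2n - i - 2`. -/
def oddExt (n : ℕ) : Matrix (Fin (2 * n)) (Fin (n - 1)) ℝ :=
  Matrix.of fun k i =>
    if (k : ℕ) = (i : ℕ) then 1
    else if (k : ℕ) + (i : ℕ) + 2 = 2 * n then -1 else 0

/-- The restriction operator `R_{o,h} = (1/2) E_{o,h}ᵀ`. -/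
def oddRestr (n : ℕ) : Matrix (Fin (n - 1)) (Fin (2 * n)) ℝ :=
  (2 : ℝ)⁻¹ • (oddExt n)ᵀ

/-- The Dirichlet matrix `T_h^D = (1/h²) · tridiag(-1, 2, -1)`, with `h = 1/n`
(so `1/h² = n²`). -/
def ThD (n : ℕ) : Matrix (Fin (n - 1)) (Fin (n - 1)) ℝ :=
  ((n : ℝ) ^ 2) • tridiag (n - 1)

/-- The periodic matrix `T_h^P = (1/h²) · (tridiag(-1,2,-1) - e₁ e_Nᵀ - e_N e₁ᵀ)`,
with `h = 1/n`, `N = 2n` (0-based: corners at `(0, 2n-1)` and `(2n-1, 0)`). -/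
def ThP (n : ℕ) : Matrix (Fin (2 * n)) (Fin (2 * n)) ℝ :=
  ((n : ℝ) ^ 2) •
    (tridiag (2 * n)
      - Matrix.of (fun (i j : Fin (2 * n)) => if (i : ℕ) = 0 ∧ (j : ℕ) = 2 * n - 1 then 1 else 0)
      - Matrix.of (fun (i j : Fin (2 * n)) => if (i : ℕ) = 2 * n - 1 ∧ (j : ℕ) = 0 then 1 else 0))

/-- The `d`-fold Kronecker power `X^{⊗d}`, where `ℝ^{a^d}` is identified with the
space of functions `(Fin d → Fin a) → ℝ`. -/
def kronPow {a b : ℕ} (d : ℕ) (X : Matrix (Fin a) (Fin b) ℝ) :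
    Matrix (Fin d → Fin a) (Fin d → Fin b) ℝ :=
  Matrix.of fun i j => ∏ t, X (i t) (j t)

/-- `Σ_{t=1}^d I^{⊗(t-1)} ⊗ T ⊗ I^{⊗(d-t)}` in the function-indexed representation. -/
def kronSumId {m : ℕ} (d : ℕ) (T : Matrix (Fin m) (Fin m) ℝ) :
    Matrix (Fin d → Fin m) (Fin d → Fin m) ℝ :=
  ∑ t : Fin d, Matrix.of fun i j =>
    T (i t) (j t) * ∏ s ∈ Finset.univ.erase t, (if i s = j s then (1 : ℝ) else 0)

/-- The `d`-dimensional discrete Dirichlet reaction-diffusion matrix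
`A_h^D = Σ_j I^{⊗(j-1)} ⊗ T_h^D ⊗ I^{⊗(d-j)} + c I^{⊗d}`. -/
def AD (n d : ℕ) (c : ℝ) : Matrix (Fin d → Fin (n - 1)) (Fin d → Fin (n - 1)) ℝ :=
  kronSumId d (ThD n) + c • 1

/-- The `d`-dimensional discrete periodic reaction-diffusion matrix
`A_h^P = Σ_j I^{⊗(j-1)} ⊗ T_h^P ⊗ I^{⊗(d-j)} + c I^{⊗d}`. -/
def AP (n d : ℕ) (c : ℝ) : Matrix (Fin d → Fin (2 * n)) (Fin d → Fin (2 * n)) ℝ :=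
  kronSumId d (ThP n) + c • 1

/-- A pair `(M^D, M^P)` is LFA-compatible with respect to an extension `E` and a
restriction `R` if `M^D = R M^P E` and `M^P` maps `range E` into itself. -/
def LFACompatible {α β : Type*} [Fintype α] [Fintype β]
    (E : Matrix α β ℝ) (R : Matrix β α ℝ)
    (MD : Matrix β β ℝ) (MP : Matrix α α ℝ) : Prop :=
  MD = R * MP * E ∧ ∀ v ∈ Set.range E.mulVec, MP *ᵥ v ∈ Set.range E.mulVec

lemma oddExt_apply' (n : ℕ) (hn : 2 ≤ n) (l : Fin (2 * n)) (j : Fin (n - 1)) :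
    oddExt n l j =
      (if (l : ℕ) = (j : ℕ) then 1 else 0) -
      (if (l : ℕ) = 2 * n - 2 - (j : ℕ) then 1 else 0) := by
  have hj := j.isLt
  have hl := l.isLt
  unfold oddExt
  simp only [Matrix.of_apply]
  split_ifs <;> first | omega | norm_num

lemma sum_mul_oddExt (n : ℕ) (hn : 2 ≤ n) (f : Fin (2 * n) → ℝ) (j : Fin (n - 1))
    (a b : Fin (2 * n)) (ha : (a : ℕ) = (j : ℕ)) (hb : (b : ℕ) = 2 * n - 2 - (j : ℕ)) :
    ∑ l, f l * oddExt n l j = f a - f b := by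
  have key : ∀ l : Fin (2 * n), f l * oddExt n l j =
      (if l = a then f l else 0) - (if l = b then f l else 0) := by
    intro l
    have h1 : (l = a) ↔ ((l : ℕ) = (j : ℕ)) := by rw [Fin.ext_iff, ha]
    have h2 : (l = b) ↔ ((l : ℕ) = 2 * n - 2 - (j : ℕ)) := by rw [Fin.ext_iff, hb]
    rw [oddExt_apply' n hn, mul_sub]
    simp [h1, h2, mul_ite]
  rw [Finset.sum_congr rfl (fun l _ => key l), Finset.sum_sub_distrib]
  simp

lemma ThP_mk (n : ℕ) (p q : ℕ) (hp : p < 2 * n) (hq : q < 2 * n)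
    (hc1 : ¬(p = 0 ∧ q = 2 * n - 1)) (hc2 : ¬(p = 2 * n - 1 ∧ q = 0)) :
    ThP n ⟨p, hp⟩ ⟨q, hq⟩ =
      (n : ℝ) ^ 2 * (if p = q then 2 else if p + 1 = q ∨ q + 1 = p then -1 else 0) := by
  simp only [ThP, tridiag, Matrix.smul_apply, Matrix.sub_apply, Matrix.of_apply, smul_eq_mul]
  rw [if_neg hc1, if_neg hc2]
  split_ifs <;> ring

/-- `R_{o,h} T_h^P E_{o,h} = T_h^D` (with `h = 1/n`). -/
theorem oddRestr_ThP_oddExt (n : ℕ) (hn : 2 ≤ n) :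
    oddRestr n * ThP n * oddExt n = ThD n := by
  ext i j
  have hi := i.isLt
  have hj := j.isLt
  have hia : (i : ℕ) < 2 * n := by omega
  have hib : 2 * n - 2 - (i : ℕ) < 2 * n := by omega
  have hja : (j : ℕ) < 2 * n := by omega
  have hjb : 2 * n - 2 - (j : ℕ) < 2 * n := by omega
  set a1 : Fin (2 * n) := ⟨(i : ℕ), hia⟩ with ha1
  set a2 : Fin (2 * n) := ⟨2 * n - 2 - (i : ℕ), hib⟩ with ha2
  set b1 : Fin (2 * n) := ⟨(j : ℕ), hja⟩ with hb1
  set b2 : Fin (2 * n) := ⟨2 * n - 2 - (j : ℕ), hjb⟩ with hb2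
  have hRP : ∀ l : Fin (2 * n),
      (oddRestr n * ThP n) i l = 2⁻¹ * (ThP n a1 l - ThP n a2 l) := by
    intro l
    rw [Matrix.mul_apply]
    have hk : ∀ k : Fin (2 * n),
        oddRestr n i k * ThP n k l = 2⁻¹ * (ThP n k l * oddExt n k i) := by
      intro k
      simp only [oddRestr, Matrix.smul_apply, Matrix.transpose_apply, smul_eq_mul]
      ring
    rw [Finset.sum_congr rfl (fun k _ => hk k), ← Finset.mul_sum,
      sum_mul_oddExt n hn (fun k => ThP n k l) i a1 a2 rfl rfl]
  have hmain : (oddRestr n * ThP n * oddExt n) i j =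
      (oddRestr n * ThP n) i b1 - (oddRestr n * ThP n) i b2 := by
    rw [Matrix.mul_apply]
    exact sum_mul_oddExt n hn (fun l => (oddRestr n * ThP n) i l) j b1 b2 rfl rfl
  have e11 : ThP n a1 b1 =
      (n : ℝ) ^ 2 * (if (i : ℕ) = (j : ℕ) then 2
        else if (i : ℕ) + 1 = (j : ℕ) ∨ (j : ℕ) + 1 = (i : ℕ) then -1 else 0) :=
    ThP_mk n _ _ hia hja (by omega) (by omega)
  have z21 : ThP n a2 b1 = 0 := by
    rw [ha2, hb1, ThP_mk n _ _ hib hja (by omega) (by omega),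
      if_neg (by omega : ¬(2 * n - 2 - (i : ℕ) = (j : ℕ))),
      if_neg (by omega : ¬(2 * n - 2 - (i : ℕ) + 1 = (j : ℕ) ∨ (j : ℕ) + 1 = 2 * n - 2 - (i : ℕ)))]
    ring
  have z12 : ThP n a1 b2 = 0 := by
    rw [ha1, hb2, ThP_mk n _ _ hia hjb (by omega) (by omega),
      if_neg (by omega : ¬((i : ℕ) = 2 * n - 2 - (j : ℕ))),
      if_neg (by omega : ¬((i : ℕ) + 1 = 2 * n - 2 - (j : ℕ) ∨ 2 * n - 2 - (j : ℕ) + 1 = (i : ℕ)))]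
    ring
  have e22 : ThP n a2 b2 =
      (n : ℝ) ^ 2 * (if (i : ℕ) = (j : ℕ) then 2
        else if (i : ℕ) + 1 = (j : ℕ) ∨ (j : ℕ) + 1 = (i : ℕ) then -1 else 0) := by
    rw [ha2, hb2, ThP_mk n _ _ hib hjb (by omega) (by omega)]
    have h1 : (2 * n - 2 - (i : ℕ) = 2 * n - 2 - (j : ℕ)) ↔ ((i : ℕ) = (j : ℕ)) := by omega
    have h2 : (2 * n - 2 - (i : ℕ) + 1 = 2 * n - 2 - (j : ℕ) ∨
        2 * n - 2 - (j : ℕ) + 1 = 2 * n - 2 - (i : ℕ)) ↔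
        ((i : ℕ) + 1 = (j : ℕ) ∨ (j : ℕ) + 1 = (i : ℕ)) := by omega
    simp only [h1, h2]
  rw [hmain, hRP b1, hRP b2, e11, z21, z12, e22]
  simp only [ThD, tridiag, Matrix.smul_apply, Matrix.of_apply, smul_eq_mul]
  ring
end
end

section
/- Let n ≥ 2, N = 2n, h = 1/n, d ≥ 1, and c ∈ ℝ. The d-dimensional periodic matrix A_h^P maps the range of E_{o,h}^{⊗d} into itself: for every u ∈ range(E_{o,h}^{⊗d}), A_h^P u ∈ range(E_{o,h}^{⊗d}). Consequently (together with A_h^D = R_{o,h}^{⊗d} A_h^P E_{o,h}^{⊗d}), the pair (A_h^D, A_h^P) is LFA-compatible. -/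
open Matrix Finset

noncomputable section

/-! ### Auxiliary lemmas (added) -/

lemma sum_update_aux {d a : ℕ} (t : Fin d) (i : Fin d → Fin a) (f : (Fin d → Fin a) → ℝ) :
    ∑ k : Fin d → Fin a, (∏ s ∈ Finset.univ.erase t, (if i s = k s then (1:ℝ) else 0)) * f k
      = ∑ m : Fin a, f (Function.update i t m) := by
  classical
  rw [← (Equiv.funSplitAt t (Fin a)).symm.sum_comp
    (fun k => (∏ s ∈ Finset.univ.erase t, (if i s = k s then (1:ℝ) else 0)) * f k)]
  rw [Fintype.sum_prod_type]
  refine Finset.sum_congr rfl fun m _ => ?_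
  rw [Finset.sum_eq_single (fun s : {s // s ≠ t} => i s.1)]
  · have h1 : (Equiv.funSplitAt t (Fin a)).symm (m, fun s : {s // s ≠ t} => i s.1)
        = Function.update i t m := by
      funext s
      by_cases hs : s = t
      · subst hs; simp
      · simp [hs, Function.update_of_ne hs]
    rw [h1]
    have h2 : ∀ s ∈ Finset.univ.erase t,
        (if i s = Function.update i t m s then (1:ℝ) else 0) = 1 := by
      intro s hs
      have : s ≠ t := (Finset.mem_erase.mp hs).1
      rw [Function.update_of_ne this]; simp
    rw [Finset.prod_congr rfl h2]; simp
  · intro g _ hg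
    have : ∃ s : {s // s ≠ t}, g s ≠ i s.1 := by
      by_contra h; push_neg at h; exact hg (funext fun s => h s)
    obtain ⟨s, hs⟩ := this
    have hmem : (s : Fin d) ∈ Finset.univ.erase t := Finset.mem_erase.mpr ⟨s.2, Finset.mem_univ _⟩
    rw [Finset.prod_eq_zero hmem, zero_mul]
    have : (Equiv.funSplitAt t (Fin a)).symm (m, g) s.1 = g s := by simp [s.2]
    rw [this, if_neg (fun h => hs h.symm)]
  · simp

lemma prod_update_eval {d a b : ℕ} (t : Fin d) (i : Fin d → Fin a) (j : Fin d → Fin b)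
    (E : Matrix (Fin a) (Fin b) ℝ) (m : Fin a) :
    ∏ s, E (Function.update i t m s) (j s)
      = E m (j t) * ∏ s ∈ Finset.univ.erase t, E (i s) (j s) := by
  rw [← Finset.mul_prod_erase Finset.univ _ (Finset.mem_univ t), Function.update_self]
  congr 1
  refine Finset.prod_congr rfl fun s hs => ?_
  rw [Function.update_of_ne (Finset.mem_erase.mp hs).1]

lemma inner_eval {a b d : ℕ} (t : Fin d) (i : Fin d → Fin a) (j : Fin d → Fin b)
    (T : Matrix (Fin a) (Fin a) ℝ) (E : Matrix (Fin a) (Fin b) ℝ) :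
    ∑ k : Fin d → Fin a,
      (T (i t) (k t) * ∏ s ∈ Finset.univ.erase t, (if i s = k s then (1:ℝ) else 0))
        * ∏ s, E (k s) (j s)
      = (T * E) (i t) (j t) * ∏ s ∈ Finset.univ.erase t, E (i s) (j s) := by
  have h := sum_update_aux t i (fun k => T (i t) (k t) * ∏ s, E (k s) (j s))
  calc ∑ k : Fin d → Fin a,
      (T (i t) (k t) * ∏ s ∈ Finset.univ.erase t, (if i s = k s then (1:ℝ) else 0))
        * ∏ s, E (k s) (j s)
      = ∑ k : Fin d → Fin a,
        (∏ s ∈ Finset.univ.erase t, (if i s = k s then (1:ℝ) else 0))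
          * (T (i t) (k t) * ∏ s, E (k s) (j s)) := by
        refine Finset.sum_congr rfl fun k _ => by ring
    _ = ∑ m : Fin a, T (i t) (Function.update i t m t) * ∏ s, E (Function.update i t m s) (j s) := h
    _ = (T * E) (i t) (j t) * ∏ s ∈ Finset.univ.erase t, E (i s) (j s) := by
        rw [Matrix.mul_apply, Finset.sum_mul]
        refine Finset.sum_congr rfl fun m _ => ?_
        rw [Function.update_self, prod_update_eval]
        ring

lemma inner_eval' {a b d : ℕ} (t : Fin d) (i : Fin d → Fin a) (j : Fin d → Fin b)
    (T' : Matrix (Fin b) (Fin b) ℝ) (E : Matrix (Fin a) (Fin b) ℝ) :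
    ∑ k : Fin d → Fin b,
      (∏ s, E (i s) (k s)) *
        (T' (k t) (j t) * ∏ s ∈ Finset.univ.erase t, (if k s = j s then (1:ℝ) else 0))
      = (E * T') (i t) (j t) * ∏ s ∈ Finset.univ.erase t, E (i s) (j s) := by
  have h := sum_update_aux t j (fun k => (∏ s, E (i s) (k s)) * T' (k t) (j t))
  calc ∑ k : Fin d → Fin b,
      (∏ s, E (i s) (k s)) *
        (T' (k t) (j t) * ∏ s ∈ Finset.univ.erase t, (if k s = j s then (1:ℝ) else 0))
      = ∑ k : Fin d → Fin b,
        (∏ s ∈ Finset.univ.erase t, (if j s = k s then (1:ℝ) else 0))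
          * ((∏ s, E (i s) (k s)) * T' (k t) (j t)) := by
        refine Finset.sum_congr rfl fun k _ => ?_
        have h' : ∀ s, (if k s = j s then (1:ℝ) else 0) = (if j s = k s then (1:ℝ) else 0) := by
          intro s; simp [eq_comm]
        simp only [h']; ring
    _ = ∑ m : Fin b, (∏ s, E (i s) (Function.update j t m s))
          * T' (Function.update j t m t) (j t) := h
    _ = (E * T') (i t) (j t) * ∏ s ∈ Finset.univ.erase t, E (i s) (j s) := by
        rw [Matrix.mul_apply, Finset.sum_mul]
        refine Finset.sum_congr rfl fun m _ => ?_
        have h2 : ∏ s, E (i s) (Function.update j t m s)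
            = E (i t) m * ∏ s ∈ Finset.univ.erase t, E (i s) (j s) := by
          rw [← Finset.mul_prod_erase Finset.univ _ (Finset.mem_univ t), Function.update_self]
          congr 1
          refine Finset.prod_congr rfl fun s hs => ?_
          rw [Function.update_of_ne (Finset.mem_erase.mp hs).1]
        rw [h2, Function.update_self]
        ring

lemma kronSumId_mul_kronPow {a b : ℕ} (d : ℕ) (T : Matrix (Fin a) (Fin a) ℝ)
    (E : Matrix (Fin a) (Fin b) ℝ) (T' : Matrix (Fin b) (Fin b) ℝ) (h : T * E = E * T') :
    kronSumId d T * kronPow d E = kronPow d E * kronSumId d T' := by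
  ext i j
  simp only [kronSumId, kronPow, Matrix.mul_apply, Matrix.of_apply, Matrix.sum_apply,
    Finset.sum_mul, Finset.mul_sum]
  rw [Finset.sum_comm]
  conv_rhs => rw [Finset.sum_comm]
  refine Finset.sum_congr rfl fun t _ => ?_
  rw [inner_eval, inner_eval', h]

lemma kronPow_mul {a b c : ℕ} (d : ℕ) (X : Matrix (Fin a) (Fin b) ℝ)
    (Y : Matrix (Fin b) (Fin c) ℝ) :
    kronPow d X * kronPow d Y = kronPow d (X * Y) := by
  ext i j
  simp only [kronPow, Matrix.mul_apply, Matrix.of_apply]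
  rw [Finset.prod_univ_sum, ← Fintype.piFinset_univ]
  refine Finset.sum_congr rfl fun k _ => ?_
  rw [Finset.prod_mul_distrib]

lemma kronPow_one {a : ℕ} (d : ℕ) : kronPow d (1 : Matrix (Fin a) (Fin a) ℝ) = 1 := by
  ext i j
  simp only [kronPow, Matrix.of_apply, Matrix.one_apply]
  rw [Finset.prod_boole]
  simp [funext_iff]

/-! ### Entrywise computations -/

def eAux (n a b : ℕ) : ℝ := (if a = b then 1 else 0) - (if a + b + 2 = 2 * n then 1 else 0)

lemma oddExt_eq (n : ℕ) (k : Fin (2 * n)) (i : Fin (n - 1)) :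
    oddExt n k i = eAux n (k : ℕ) (i : ℕ) := by
  have hi : (i : ℕ) < n - 1 := i.2
  simp only [oddExt, eAux, Matrix.of_apply]
  split_ifs <;> first | (exfalso; omega) | norm_num

lemma oddExt_eq2 (n : ℕ) (l : Fin (2 * n)) (j : Fin (n - 1)) :
    oddExt n l j
      = (if (l : ℕ) = (j : ℕ) then 1 else 0)
        - (if (l : ℕ) = 2 * n - 2 - (j : ℕ) then 1 else 0) := by
  have hj : (j : ℕ) < n - 1 := j.2
  have hl : (l : ℕ) < 2 * n := l.2
  simp only [oddExt, Matrix.of_apply]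
  split_ifs <;> first | (exfalso; omega) | norm_num

lemma sum_if_col {N : ℕ} (a : ℕ) (f : Fin N → ℝ) :
    ∑ l : Fin N, (if (l : ℕ) = a then 1 else 0) * f l
      = if h : a < N then f ⟨a, h⟩ else 0 := by
  split_ifs with h
  · rw [Finset.sum_eq_single (⟨a, h⟩ : Fin N)]
    · simp
    · intro b _ hb
      rw [if_neg, zero_mul]
      exact fun hba => hb (Fin.ext hba)
    · simp
  · apply Finset.sum_eq_zero
    intro l _
    rw [if_neg, zero_mul]
    exact fun hl => h (hl ▸ l.2)

lemma sum_if_col_rev {N : ℕ} (a : ℕ) (f : Fin N → ℝ) :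
    ∑ l : Fin N, (if a = (l : ℕ) then 1 else 0) * f l
      = if h : a < N then f ⟨a, h⟩ else 0 := by
  rw [← sum_if_col a f]
  refine Finset.sum_congr rfl fun l _ => ?_
  congr 1
  simp [eq_comm]

lemma sum_if_col_and {N : ℕ} (P : Prop) [Decidable P] (a : ℕ) (f : Fin N → ℝ) :
    ∑ l : Fin N, (if P ∧ (l : ℕ) = a then 1 else 0) * f l
      = if P then (if h : a < N then f ⟨a, h⟩ else 0) else 0 := by
  by_cases hP : P
  · rw [if_pos hP, ← sum_if_col a f]
    refine Finset.sum_congr rfl fun l _ => ?_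
    congr 1
    simp [hP]
  · rw [if_neg hP]
    apply Finset.sum_eq_zero
    intro l _
    rw [if_neg (fun h => hP h.1), zero_mul]

set_option maxHeartbeats 1000000 in
lemma ThP_row (n : ℕ) (hn : 2 ≤ n) (k l : Fin (2 * n)) :
    ThP n k l = (n : ℝ) ^ 2 *
      (2 * (if (k : ℕ) = (l : ℕ) then 1 else 0)
        - (if (l : ℕ) = (k : ℕ) + 1 then 1 else 0)
        - (if 1 ≤ (k : ℕ) ∧ (l : ℕ) = (k : ℕ) - 1 then 1 else 0)
        - (if (k : ℕ) = 0 ∧ (l : ℕ) = 2 * n - 1 then 1 else 0)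
        - (if (k : ℕ) = 2 * n - 1 ∧ (l : ℕ) = 0 then 1 else 0)) := by
  have hk : (k : ℕ) < 2 * n := k.2
  have hl : (l : ℕ) < 2 * n := l.2
  simp only [ThP, tridiag, Matrix.smul_apply, Matrix.sub_apply, Matrix.of_apply, smul_eq_mul]
  split_ifs <;> first | (exfalso; omega) | (norm_num <;> omega)

set_option maxHeartbeats 1000000 in
lemma ThD_col (n : ℕ) (hn : 2 ≤ n) (j i : Fin (n - 1)) :
    ThD n j i = (n : ℝ) ^ 2 *
      (2 * (if (j : ℕ) = (i : ℕ) then 1 else 0)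
        - (if 1 ≤ (i : ℕ) ∧ (j : ℕ) = (i : ℕ) - 1 then 1 else 0)
        - (if (j : ℕ) = (i : ℕ) + 1 then 1 else 0)) := by
  have hj : (j : ℕ) < n - 1 := j.2
  have hi : (i : ℕ) < n - 1 := i.2
  simp only [ThD, tridiag, Matrix.smul_apply, Matrix.of_apply, smul_eq_mul]
  split_ifs <;> first | (exfalso; omega) | (norm_num <;> omega)

set_option maxHeartbeats 1000000 in
lemma key_nat (n k i : ℕ) (hn : 2 ≤ n) (hk : k < 2 * n) (hi : i < n - 1) :
    (if k + 1 < 2 * n then eAux n (k + 1) i else 0)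
      + (if 1 ≤ k then eAux n (k - 1) i else 0)
      + (if k = 0 then eAux n (2 * n - 1) i else 0)
      + (if k = 2 * n - 1 then eAux n 0 i else 0)
    = (if 1 ≤ i then eAux n k (i - 1) else 0)
      + (if i + 1 < n - 1 then eAux n k (i + 1) else 0) := by
  have h1 : (if 1 ≤ k then eAux n (k - 1) i else 0)
      = (if k = i + 1 then 1 else 0) - (if k + i + 1 = 2 * n then 1 else 0) := by
    unfold eAux; split_ifs <;> first | (exfalso; omega) | (norm_num <;> omega)
  have h2 : (if k + 1 < 2 * n then eAux n (k + 1) i else 0)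
      = (if k + 1 = i then 1 else 0) - (if k + i + 3 = 2 * n then 1 else 0) := by
    unfold eAux; split_ifs <;> first | (exfalso; omega) | (norm_num <;> omega)
  have h3 : (if k = 0 then eAux n (2 * n - 1) i else 0) = 0 := by
    unfold eAux; split_ifs <;> first | (exfalso; omega) | (norm_num <;> omega)
  have h4 : (if k = 2 * n - 1 then eAux n 0 i else 0)
      = if k = 2 * n - 1 ∧ i = 0 then 1 else 0 := by
    unfold eAux; split_ifs <;> first | (exfalso; omega) | (norm_num <;> omega)
  have h5 : (if 1 ≤ i then eAux n k (i - 1) else 0)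
      = (if k + 1 = i then 1 else 0) - (if 1 ≤ i ∧ k + i + 1 = 2 * n then 1 else 0) := by
    unfold eAux; split_ifs <;> first | (exfalso; omega) | (norm_num <;> omega)
  have h6 : (if i + 1 < n - 1 then eAux n k (i + 1) else 0)
      = (if i + 1 < n - 1 ∧ k = i + 1 then 1 else 0)
        - (if i + 1 < n - 1 ∧ k + i + 3 = 2 * n then 1 else 0) := by
    unfold eAux; split_ifs <;> first | (exfalso; omega) | (norm_num <;> omega)
  rw [h1, h2, h3, h4, h5, h6]
  split_ifs <;> first | (exfalso; omega) | (norm_num <;> omega)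

set_option maxHeartbeats 1000000 in
lemma intertwine (n : ℕ) (hn : 2 ≤ n) : ThP n * oddExt n = oddExt n * ThD n := by
  ext k i
  have hk : (k : ℕ) < 2 * n := k.2
  have hi : (i : ℕ) < n - 1 := i.2
  have hL : (ThP n * oddExt n) k i = (n : ℝ) ^ 2 *
      (2 * eAux n (k : ℕ) (i : ℕ)
        - (if (k : ℕ) + 1 < 2 * n then eAux n ((k : ℕ) + 1) (i : ℕ) else 0)
        - (if 1 ≤ (k : ℕ) then eAux n ((k : ℕ) - 1) (i : ℕ) else 0)
        - (if (k : ℕ) = 0 then eAux n (2 * n - 1) (i : ℕ) else 0)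
        - (if (k : ℕ) = 2 * n - 1 then eAux n 0 (i : ℕ) else 0)) := by
    rw [Matrix.mul_apply]
    have step : ∀ l : Fin (2 * n), ThP n k l * oddExt n l i
        = (n : ℝ) ^ 2 *
          (2 * ((if (k : ℕ) = (l : ℕ) then (1:ℝ) else 0) * oddExt n l i)
            - ((if (l : ℕ) = (k : ℕ) + 1 then (1:ℝ) else 0) * oddExt n l i)
            - ((if 1 ≤ (k : ℕ) ∧ (l : ℕ) = (k : ℕ) - 1 then (1:ℝ) else 0) * oddExt n l i)
            - ((if (k : ℕ) = 0 ∧ (l : ℕ) = 2 * n - 1 then (1:ℝ) else 0) * oddExt n l i)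
            - ((if (k : ℕ) = 2 * n - 1 ∧ (l : ℕ) = 0 then (1:ℝ) else 0) * oddExt n l i)) := by
      intro l
      rw [ThP_row n hn k l]
      ring
    rw [Finset.sum_congr rfl (fun l _ => step l)]
    simp only [Finset.sum_sub_distrib, ← Finset.mul_sum]
    rw [sum_if_col_rev, sum_if_col, sum_if_col_and, sum_if_col_and, sum_if_col_and]
    rw [dif_pos hk, dif_pos (show (k : ℕ) - 1 < 2 * n by omega),
      dif_pos (show 2 * n - 1 < 2 * n by omega), dif_pos (show 0 < 2 * n by omega)]
    simp only [oddExt_eq, Fin.val_mk, dite_eq_ite]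
  have hR : (oddExt n * ThD n) k i = (n : ℝ) ^ 2 *
      (2 * eAux n (k : ℕ) (i : ℕ)
        - (if 1 ≤ (i : ℕ) then eAux n (k : ℕ) ((i : ℕ) - 1) else 0)
        - (if (i : ℕ) + 1 < n - 1 then eAux n (k : ℕ) ((i : ℕ) + 1) else 0)) := by
    rw [Matrix.mul_apply]
    have step : ∀ j : Fin (n - 1), oddExt n k j * ThD n j i
        = (n : ℝ) ^ 2 *
          (2 * ((if (j : ℕ) = (i : ℕ) then (1:ℝ) else 0) * oddExt n k j)
            - ((if 1 ≤ (i : ℕ) ∧ (j : ℕ) = (i : ℕ) - 1 then (1:ℝ) else 0) * oddExt n k j)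
            - ((if (j : ℕ) = (i : ℕ) + 1 then (1:ℝ) else 0) * oddExt n k j)) := by
      intro j
      rw [ThD_col n hn j i]
      ring
    rw [Finset.sum_congr rfl (fun j _ => step j)]
    simp only [Finset.sum_sub_distrib, ← Finset.mul_sum]
    rw [sum_if_col, sum_if_col_and, sum_if_col]
    rw [dif_pos hi, dif_pos (show (i : ℕ) - 1 < n - 1 by omega)]
    simp only [oddExt_eq, Fin.val_mk, dite_eq_ite]
  rw [hL, hR]
  have hkey := key_nat n (k : ℕ) (i : ℕ) hn hk hi
  congr 1
  linarith [hkey]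

lemma restr_mul_ext (n : ℕ) (hn : 2 ≤ n) : oddRestr n * oddExt n = 1 := by
  ext j i
  have hj : (j : ℕ) < n - 1 := j.2
  have hi : (i : ℕ) < n - 1 := i.2
  rw [Matrix.mul_apply]
  have step : ∀ l : Fin (2 * n), oddRestr n j l * oddExt n l i
      = (2 : ℝ)⁻¹ *
        (((if (l : ℕ) = (j : ℕ) then (1:ℝ) else 0) * oddExt n l i)
          - ((if (l : ℕ) = 2 * n - 2 - (j : ℕ) then (1:ℝ) else 0) * oddExt n l i)) := by
    intro l
    have : oddRestr n j l = (2 : ℝ)⁻¹ * oddExt n l j := by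
      simp [oddRestr, Matrix.smul_apply, Matrix.transpose_apply]
    rw [this, oddExt_eq2 n l j]
    ring
  rw [Finset.sum_congr rfl (fun l _ => step l)]
  simp only [Finset.sum_sub_distrib, ← Finset.mul_sum]
  rw [sum_if_col, sum_if_col]
  rw [dif_pos (show (j : ℕ) < 2 * n by omega),
    dif_pos (show 2 * n - 2 - (j : ℕ) < 2 * n by omega)]
  simp only [oddExt_eq, Fin.val_mk]
  rw [Matrix.one_apply]
  rw [if_congr (Fin.ext_iff (a := j) (b := i)) rfl rfl]
  unfold eAux
  split_ifs <;> first | (exfalso; omega) | (norm_num <;> omega)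

/-- `A_h^P` maps `range E_{o,h}^{⊗d}` into itself; consequently the pair
`(A_h^D, A_h^P)` is LFA-compatible. -/
theorem AP_invariant_and_LFACompatible (n d : ℕ) (hn : 2 ≤ n) (hd : 1 ≤ d) (c : ℝ) :
    (∀ u ∈ Set.range (kronPow d (oddExt n)).mulVec,
      AP n d c *ᵥ u ∈ Set.range (kronPow d (oddExt n)).mulVec) ∧
    LFACompatible (kronPow d (oddExt n)) (kronPow d (oddRestr n)) (AD n d c) (AP n d c) := by
  have hTE : ThP n * oddExt n = oddExt n * ThD n := intertwine n hn
  have hK : kronSumId d (ThP n) * kronPow d (oddExt n)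
      = kronPow d (oddExt n) * kronSumId d (ThD n) :=
    kronSumId_mul_kronPow d (ThP n) (oddExt n) (ThD n) hTE
  have hAP : AP n d c * kronPow d (oddExt n) = kronPow d (oddExt n) * AD n d c := by
    show (kronSumId d (ThP n) + c • 1) * kronPow d (oddExt n)
      = kronPow d (oddExt n) * (kronSumId d (ThD n) + c • 1)
    rw [Matrix.add_mul, Matrix.mul_add, hK, Matrix.smul_mul, Matrix.mul_smul,
      Matrix.one_mul, Matrix.mul_one]
  have hRE : kronPow d (oddRestr n) * kronPow d (oddExt n) = 1 := by
    rw [kronPow_mul, restr_mul_ext n hn, kronPow_one]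
  have hinv : ∀ u ∈ Set.range (kronPow d (oddExt n)).mulVec,
      AP n d c *ᵥ u ∈ Set.range (kronPow d (oddExt n)).mulVec := by
    rintro u ⟨w, rfl⟩
    exact ⟨AD n d c *ᵥ w, by rw [Matrix.mulVec_mulVec, Matrix.mulVec_mulVec, hAP]⟩
  refine ⟨hinv, ?_, hinv⟩
  rw [Matrix.mul_assoc, hAP, ← Matrix.mul_assoc, hRE, Matrix.one_mul]
end
end

section
/- Let n ≥ 2 be even, N = 2n, h = 1/n, c ∈ ℝ, and consider the one-dimensional (d = 1) fine-grid matrices A_h^D = T_h^D + c I_{n−1} and A_h^P = T_h^P + c I_N, coarse-grid matrices A_{2h}^D = T_{2h}^D + c I_{n/2−1} ∈ ℝ^{(n/2−1)×(n/2−1)} and A_{2h}^P = T_{2h}^P + c I_n ∈ ℝ^{n×n} (with step 2h), smoothers S_h^D, S_h^P, restriction matrices I_{h,2h}^D, I_{h,2h}^P and prolongation matrices I_{2h,h}^D, I_{2h,h}^P. Assume the pairs (A_h^D, A_h^P) and (S_h^D, S_h^P) are LFA-compatible with respect to (E_{o,h}, R_{o,h}); assume A_{2h}^D, A_{2h}^P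 are invertible and ((A_{2h}^D)^{−1}, (A_{2h}^P)^{−1}) is LFA-compatible with respect to (E_{o,2h}, R_{o,2h}); assume I_{h,2h}^D = R_{o,2h} I_{h,2h}^P E_{o,h} with I_{h,2h}^P v ∈ range(E_{o,2h}) for all v ∈ range(E_{o,h}), and I_{2h,h}^D = R_{o,h} I_{2h,h}^P E_{o,2h} with I_{2h,h}^P v ∈ range(E_{o,h}) for all v ∈ range(E_{o,2h}); assume A_h^D and A_h^P are invertible. Define the two-grid iterators B_{TG}^{D,P} = (I − (I − I_{2h,h}^{D,P} (A_{2h}^{D,P})^{−1} I_{h,2h}^{D,P} A_h^{D,P})(I − S_h^{D,P} A_h^{D,P})) (A_h^{D,P})^{−1}. Then the pair (B_{TG}^D, B_{TG}^P) is LFA-compatible with respect to (E_{o,h}, R_{o,h}): B_{TG}^D = R_{o,h} B_{TG}^P E_{o,h} and B_{TG}^P v ∈ range(E_{o,h}) for all v ∈ range(E_{o,h}). -/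
open Matrix Finset

noncomputable section

lemma oddExt_eq_s13 (n : ℕ) (k : Fin (2 * n)) (i : Fin (n - 1)) :
    oddExt n k i = (if (k : ℕ) = (i : ℕ) then (1:ℝ) else 0)
      - (if (k : ℕ) + (i : ℕ) + 2 = 2 * n then (1:ℝ) else 0) := by
  have hi := i.isLt
  by_cases h1 : (k : ℕ) = (i : ℕ)
  · have h2 : ¬ ((i : ℕ) + (i : ℕ) + 2 = 2 * n) := by omega
    simp [oddExt, h1, h2]
  · by_cases h2 : (k : ℕ) + (i : ℕ) + 2 = 2 * n
    · simp [oddExt, h1, h2]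
    · simp [oddExt, h1, h2]

lemma sum_ind_mul {α : Type*} [Fintype α] [DecidableEq α] (a b a' b' : α) :
    ∑ k : α, ((if k = a then (1:ℝ) else 0) - (if k = b then (1:ℝ) else 0)) *
        ((if k = a' then (1:ℝ) else 0) - (if k = b' then (1:ℝ) else 0))
      = (if a = a' then (1:ℝ) else 0) - (if a = b' then (1:ℝ) else 0)
        - (if b = a' then (1:ℝ) else 0) + (if b = b' then (1:ℝ) else 0) := by
  simp only [sub_mul, mul_sub, ite_mul, one_mul, zero_mul, mul_ite, mul_one, mul_zero,
    Finset.sum_sub_distrib, Finset.sum_ite_eq', Finset.mem_univ, if_true]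
  simp only [@eq_comm α a' a, @eq_comm α b' a, @eq_comm α a' b, @eq_comm α b' b]
  ring

lemma sumE (n : ℕ) (i j : Fin (n - 1)) :
    ∑ k : Fin (2 * n), oddExt n k i * oddExt n k j
      = if i = j then 2 else 0 := by
  have hi := i.isLt
  have hj := j.isLt
  have hn : 2 ≤ n := by omega
  have hai : (i : ℕ) < 2 * n := by omega
  have hbi : 2 * n - (i : ℕ) - 2 < 2 * n := by omega
  have haj : (j : ℕ) < 2 * n := by omega
  have hbj : 2 * n - (j : ℕ) - 2 < 2 * n := by omega
  have key := sum_ind_mul (⟨(i : ℕ), hai⟩ : Fin (2 * n)) ⟨2 * n - (i : ℕ) - 2, hbi⟩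
    (⟨(j : ℕ), haj⟩ : Fin (2 * n)) ⟨2 * n - (j : ℕ) - 2, hbj⟩
  have hcongr : ∀ k : Fin (2 * n), oddExt n k i * oddExt n k j =
      ((if k = ⟨(i : ℕ), hai⟩ then (1:ℝ) else 0) - (if k = ⟨2 * n - (i : ℕ) - 2, hbi⟩ then (1:ℝ) else 0)) *
      ((if k = ⟨(j : ℕ), haj⟩ then (1:ℝ) else 0) - (if k = ⟨2 * n - (j : ℕ) - 2, hbj⟩ then (1:ℝ) else 0)) := by
    intro k
    rw [oddExt_eq_s13, oddExt_eq_s13]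
    have e1 : ((k : ℕ) = (i : ℕ)) ↔ k = ⟨(i : ℕ), hai⟩ := by rw [Fin.ext_iff]
    have e2 : ((k : ℕ) + (i : ℕ) + 2 = 2 * n) ↔ k = ⟨2 * n - (i : ℕ) - 2, hbi⟩ := by
      rw [Fin.ext_iff]; simp; omega
    have e3 : ((k : ℕ) = (j : ℕ)) ↔ k = ⟨(j : ℕ), haj⟩ := by rw [Fin.ext_iff]
    have e4 : ((k : ℕ) + (j : ℕ) + 2 = 2 * n) ↔ k = ⟨2 * n - (j : ℕ) - 2, hbj⟩ := by
      rw [Fin.ext_iff]; simp; omega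
    rw [if_congr e1 rfl rfl, if_congr e2 rfl rfl, if_congr e3 rfl rfl, if_congr e4 rfl rfl]
  rw [Finset.sum_congr rfl fun k _ => hcongr k, key]
  by_cases h : i = j
  · subst h
    have h1 : (⟨(i : ℕ), hai⟩ : Fin (2 * n)) = ⟨(i : ℕ), haj⟩ := rfl
    have h2 : ¬ (⟨(i : ℕ), hai⟩ : Fin (2 * n)) = ⟨2 * n - (i : ℕ) - 2, hbj⟩ := by
      simp [Fin.ext_iff]; omega
    have h3 : ¬ (⟨2 * n - (i : ℕ) - 2, hbi⟩ : Fin (2 * n)) = ⟨(i : ℕ), haj⟩ := by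
      simp [Fin.ext_iff]; omega
    have h4 : (⟨2 * n - (i : ℕ) - 2, hbi⟩ : Fin (2 * n)) = ⟨2 * n - (i : ℕ) - 2, hbj⟩ := rfl
    simp [h1, h2, h3, h4]
    norm_num
  · have hij : (i : ℕ) ≠ (j : ℕ) := fun hh => h (Fin.ext hh)
    have h1 : ¬ (⟨(i : ℕ), hai⟩ : Fin (2 * n)) = ⟨(j : ℕ), haj⟩ := by
      simp [Fin.ext_iff]; omega
    have h2 : ¬ (⟨(i : ℕ), hai⟩ : Fin (2 * n)) = ⟨2 * n - (j : ℕ) - 2, hbj⟩ := by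
      simp [Fin.ext_iff]; omega
    have h3 : ¬ (⟨2 * n - (i : ℕ) - 2, hbi⟩ : Fin (2 * n)) = ⟨(j : ℕ), haj⟩ := by
      simp [Fin.ext_iff]; omega
    have h4 : ¬ (⟨2 * n - (i : ℕ) - 2, hbi⟩ : Fin (2 * n)) = ⟨2 * n - (j : ℕ) - 2, hbj⟩ := by
      simp [Fin.ext_iff]; omega
    simp [h1, h2, h3, h4, h]

lemma oddRestr_mul_oddExt (n : ℕ) : oddRestr n * oddExt n = 1 := by
  ext i j
  simp only [oddRestr, Matrix.smul_mul, Matrix.smul_apply, Matrix.mul_apply,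
    Matrix.transpose_apply, Matrix.one_apply, smul_eq_mul]
  simp only [mul_assoc]
  rw [← Finset.mul_sum, sumE]
  by_cases h : i = j <;> simp [h] <;> norm_num


section CompFramework

set_option linter.unusedSectionVars false

variable {α β γ δ ε ζ : Type*}
  [Fintype α] [Fintype β] [Fintype γ] [Fintype δ] [Fintype ε] [Fintype ζ]
  [DecidableEq α] [DecidableEq β] [DecidableEq γ] [DecidableEq δ] [DecidableEq ε] [DecidableEq ζ]

lemma mat_eq_of_mulVec (A B : Matrix α β ℝ) (h : ∀ x, A *ᵥ x = B *ᵥ x) : A = B := by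
  apply Matrix.toLin'.injective
  ext x
  simp [Matrix.toLin'_apply, h]

lemma key_factor (E1 : Matrix α β ℝ) (E2 : Matrix γ δ ℝ) (R2 : Matrix δ γ ℝ)
    (MP : Matrix γ α ℝ) (hRE2 : R2 * E2 = 1)
    (hrange : ∀ v ∈ Set.range E1.mulVec, MP *ᵥ v ∈ Set.range E2.mulVec) :
    MP * E1 = E2 * (R2 * (MP * E1)) := by
  apply mat_eq_of_mulVec
  intro x
  obtain ⟨w, hw⟩ := hrange (E1 *ᵥ x) ⟨x, rfl⟩
  have hRw : R2 *ᵥ (E2 *ᵥ w) = w := by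
    rw [Matrix.mulVec_mulVec, hRE2, Matrix.one_mulVec]
  calc (MP * E1) *ᵥ x = MP *ᵥ (E1 *ᵥ x) := by rw [Matrix.mulVec_mulVec]
    _ = E2 *ᵥ w := hw.symm
    _ = E2 *ᵥ (R2 *ᵥ (E2 *ᵥ w)) := by rw [hRw]
    _ = E2 *ᵥ (R2 *ᵥ (MP *ᵥ (E1 *ᵥ x))) := by rw [hw]
    _ = (E2 * (R2 * (MP * E1))) *ᵥ x := by
        simp only [← Matrix.mulVec_mulVec]

lemma comp_mul
    (E1 : Matrix α β ℝ) (E2 : Matrix γ δ ℝ) (R2 : Matrix δ γ ℝ) (E3 : Matrix ε ζ ℝ) (R3 : Matrix ζ ε ℝ)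
    (MD : Matrix δ β ℝ) (MP : Matrix γ α ℝ) (ND : Matrix ζ δ ℝ) (NP : Matrix ε γ ℝ)
    (hRE2 : R2 * E2 = 1)
    (hM : MD = R2 * MP * E1) (hMr : ∀ v ∈ Set.range E1.mulVec, MP *ᵥ v ∈ Set.range E2.mulVec)
    (hN : ND = R3 * NP * E2) (hNr : ∀ v ∈ Set.range E2.mulVec, NP *ᵥ v ∈ Set.range E3.mulVec) :
    ND * MD = R3 * (NP * MP) * E1 ∧
      ∀ v ∈ Set.range E1.mulVec, (NP * MP) *ᵥ v ∈ Set.range E3.mulVec := by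
  constructor
  · have hkey := key_factor E1 E2 R2 MP hRE2 hMr
    rw [hN, hM]
    simp only [Matrix.mul_assoc]
    rw [← hkey]
  · intro v hv
    rw [← Matrix.mulVec_mulVec]
    exact hNr _ (hMr v hv)

lemma comp_one (E : Matrix α β ℝ) (R : Matrix β α ℝ) (hRE : R * E = 1) :
    (1 : Matrix β β ℝ) = R * (1 : Matrix α α ℝ) * E ∧
      ∀ v ∈ Set.range E.mulVec, (1 : Matrix α α ℝ) *ᵥ v ∈ Set.range E.mulVec := by
  refine ⟨by rw [Matrix.mul_one, hRE], ?_⟩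
  intro v hv; rwa [Matrix.one_mulVec]

lemma comp_sub (E : Matrix α β ℝ) (R : Matrix β α ℝ)
    (MD ND : Matrix β β ℝ) (MP NP : Matrix α α ℝ)
    (hM : MD = R * MP * E) (hMr : ∀ v ∈ Set.range E.mulVec, MP *ᵥ v ∈ Set.range E.mulVec)
    (hN : ND = R * NP * E) (hNr : ∀ v ∈ Set.range E.mulVec, NP *ᵥ v ∈ Set.range E.mulVec) :
    MD - ND = R * (MP - NP) * E ∧
      ∀ v ∈ Set.range E.mulVec, (MP - NP) *ᵥ v ∈ Set.range E.mulVec := by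
  constructor
  · rw [hM, hN, Matrix.mul_sub, Matrix.sub_mul]
  · intro v hv
    obtain ⟨x, hx⟩ := hMr v hv
    obtain ⟨y, hy⟩ := hNr v hv
    refine ⟨x - y, ?_⟩
    rw [Matrix.mulVec_sub, hx, hy, Matrix.sub_mulVec]

lemma comp_inv (E : Matrix α β ℝ) (R : Matrix β α ℝ)
    (AD : Matrix β β ℝ) (AP : Matrix α α ℝ) (hRE : R * E = 1)
    (hM : AD = R * AP * E) (hMr : ∀ v ∈ Set.range E.mulVec, AP *ᵥ v ∈ Set.range E.mulVec)
    (hUD : IsUnit AD) (hUP : IsUnit AP) :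
    AD⁻¹ = R * AP⁻¹ * E ∧
      ∀ v ∈ Set.range E.mulVec, AP⁻¹ *ᵥ v ∈ Set.range E.mulVec := by
  have hdP : IsUnit AP.det := (Matrix.isUnit_iff_isUnit_det AP).mp hUP
  have hdD : IsUnit AD.det := (Matrix.isUnit_iff_isUnit_det AD).mp hUD
  set V : Submodule ℝ (α → ℝ) := LinearMap.range E.mulVecLin with hV
  have hVmem : ∀ x, x ∈ V ↔ x ∈ Set.range E.mulVec := by
    intro x
    constructor
    · rintro ⟨y, rfl⟩; exact ⟨y, (Matrix.mulVecLin_apply E y).symm⟩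
    · rintro ⟨y, rfl⟩; exact ⟨y, Matrix.mulVecLin_apply E y⟩
  have hmaps : ∀ x ∈ V, AP.mulVecLin x ∈ V := by
    intro x hx
    rw [hVmem, Matrix.mulVecLin_apply]
    exact hMr x ((hVmem x).mp hx)
  have hinj : Function.Injective AP.mulVecLin := by
    intro x y hxy
    simp only [Matrix.mulVecLin_apply] at hxy
    have h2 : AP⁻¹ *ᵥ (AP *ᵥ x) = AP⁻¹ *ᵥ (AP *ᵥ y) := by rw [hxy]
    simpa [Matrix.mulVec_mulVec, Matrix.nonsing_inv_mul AP hdP, Matrix.one_mulVec] using h2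
  have hres : ∀ v ∈ V, ∃ w ∈ V, AP *ᵥ w = v := by
    have hrinj : Function.Injective (AP.mulVecLin.restrict hmaps) := by
      intro ⟨x, hx⟩ ⟨y, hy⟩ hxy
      have h3 := congrArg Subtype.val hxy
      simp only [LinearMap.restrict_apply] at h3
      exact Subtype.ext (hinj h3)
    have hrsurj : Function.Surjective (AP.mulVecLin.restrict hmaps) :=
      LinearMap.surjective_of_injective hrinj
    intro v hv
    obtain ⟨⟨w, hw⟩, hww⟩ := hrsurj ⟨v, hv⟩
    refine ⟨w, hw, ?_⟩
    have h4 := congrArg Subtype.val hww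
    simpa [LinearMap.restrict_apply, Matrix.mulVecLin_apply] using h4
  have hinvrange : ∀ v ∈ Set.range E.mulVec, AP⁻¹ *ᵥ v ∈ Set.range E.mulVec := by
    intro v hv
    obtain ⟨w, hw, hww⟩ := hres v ((hVmem v).mpr hv)
    have h5 : AP⁻¹ *ᵥ v = w := by
      rw [← hww, Matrix.mulVec_mulVec, Matrix.nonsing_inv_mul AP hdP, Matrix.one_mulVec]
    rw [h5]
    exact (hVmem w).mp hw
  refine ⟨?_, hinvrange⟩
  have hAPE : AP * E = E * AD := by
    have hk := key_factor E E R AP hRE hMr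
    rw [hk, hM, Matrix.mul_assoc]
  have hkey' : AP⁻¹ * E = E * (R * (AP⁻¹ * E)) := key_factor E E R AP⁻¹ hRE hinvrange
  have hEW : E * ((R * (AP⁻¹ * E)) * AD) = E := by
    calc E * ((R * (AP⁻¹ * E)) * AD) = (E * (R * (AP⁻¹ * E))) * AD := by
          simp only [Matrix.mul_assoc]
      _ = (AP⁻¹ * E) * AD := by rw [← hkey']
      _ = AP⁻¹ * (E * AD) := by rw [Matrix.mul_assoc]
      _ = AP⁻¹ * (AP * E) := by rw [hAPE]
      _ = (AP⁻¹ * AP) * E := by rw [Matrix.mul_assoc]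
      _ = E := by rw [Matrix.nonsing_inv_mul AP hdP, Matrix.one_mul]
  have hWAD : (R * (AP⁻¹ * E)) * AD = 1 := by
    have h2 : R * (E * ((R * (AP⁻¹ * E)) * AD)) = R * E := congrArg (fun Y => R * Y) hEW
    rw [← Matrix.mul_assoc, hRE, Matrix.one_mul] at h2
    exact h2
  have h3 : R * (AP⁻¹ * E) = AD⁻¹ := by
    calc R * (AP⁻¹ * E) = (R * (AP⁻¹ * E)) * (AD * AD⁻¹) := by
          rw [Matrix.mul_nonsing_inv AD hdD, Matrix.mul_one]
      _ = ((R * (AP⁻¹ * E)) * AD) * AD⁻¹ := by simp only [Matrix.mul_assoc]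
      _ = AD⁻¹ := by rw [hWAD, Matrix.one_mul]
  rw [← h3, Matrix.mul_assoc]

end CompFramework

/-- under LFA-compatibility of all two-grid components (one spatial
dimension, `n = 2m` even, fine step `h = 1/n`, coarse step `2h = 1/m`), the two-grid
iterators `B_{TG}^{D,P} = (I - (I - I_{2h,h} A_{2h}⁻¹ I_{h,2h} A_h)(I - S_h A_h)) A_h⁻¹`
form an LFA-compatible pair with respect to `(E_{o,h}, R_{o,h})`. -/
theorem twoGrid_LFACompatible (m : ℕ) (hm : 1 ≤ m) (c : ℝ)
    (SD : Matrix (Fin (2 * m - 1)) (Fin (2 * m - 1)) ℝ)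
    (SP : Matrix (Fin (2 * (2 * m))) (Fin (2 * (2 * m))) ℝ)
    (Ih2hD : Matrix (Fin (m - 1)) (Fin (2 * m - 1)) ℝ)
    (Ih2hP : Matrix (Fin (2 * m)) (Fin (2 * (2 * m))) ℝ)
    (I2hhD : Matrix (Fin (2 * m - 1)) (Fin (m - 1)) ℝ)
    (I2hhP : Matrix (Fin (2 * (2 * m))) (Fin (2 * m)) ℝ)
    (hA : LFACompatible (oddExt (2 * m)) (oddRestr (2 * m))
      (ThD (2 * m) + c • 1) (ThP (2 * m) + c • 1))
    (hS : LFACompatible (oddExt (2 * m)) (oddRestr (2 * m)) SD SP)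
    (hA2D : IsUnit (ThD m + c • (1 : Matrix (Fin (m - 1)) (Fin (m - 1)) ℝ)))
    (hA2P : IsUnit (ThP m + c • (1 : Matrix (Fin (2 * m)) (Fin (2 * m)) ℝ)))
    (hA2inv : LFACompatible (oddExt m) (oddRestr m)
      (ThD m + c • 1)⁻¹ (ThP m + c • 1)⁻¹)
    (hIh2h : Ih2hD = oddRestr m * Ih2hP * oddExt (2 * m) ∧
      ∀ v ∈ Set.range (oddExt (2 * m)).mulVec,
        Ih2hP *ᵥ v ∈ Set.range (oddExt m).mulVec)
    (hI2hh : I2hhD = oddRestr (2 * m) * I2hhP * oddExt m ∧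
      ∀ v ∈ Set.range (oddExt m).mulVec,
        I2hhP *ᵥ v ∈ Set.range (oddExt (2 * m)).mulVec)
    (hAD : IsUnit (ThD (2 * m) + c • (1 : Matrix (Fin (2 * m - 1)) (Fin (2 * m - 1)) ℝ)))
    (hAP : IsUnit (ThP (2 * m) + c • (1 : Matrix (Fin (2 * (2 * m))) (Fin (2 * (2 * m))) ℝ))) :
    LFACompatible (oddExt (2 * m)) (oddRestr (2 * m))
      ((1 - (1 - I2hhD * (ThD m + c • 1)⁻¹ * Ih2hD * (ThD (2 * m) + c • 1)) *
          (1 - SD * (ThD (2 * m) + c • 1))) * (ThD (2 * m) + c • 1)⁻¹)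
      ((1 - (1 - I2hhP * (ThP m + c • 1)⁻¹ * Ih2hP * (ThP (2 * m) + c • 1)) *
          (1 - SP * (ThP (2 * m) + c • 1))) * (ThP (2 * m) + c • 1)⁻¹) := by
  have hREf := oddRestr_mul_oddExt (2 * m)
  have hREc := oddRestr_mul_oddExt m
  have cAPinv := comp_inv (oddExt (2 * m)) (oddRestr (2 * m))
    (ThD (2 * m) + c • 1) (ThP (2 * m) + c • 1) hREf hA.1 hA.2 hAD hAP
  have cY := comp_mul (oddExt m) (oddExt m) (oddRestr m) (oddExt (2 * m)) (oddRestr (2 * m))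
    (ThD m + c • 1)⁻¹ (ThP m + c • 1)⁻¹ I2hhD I2hhP hREc hA2inv.1 hA2inv.2 hI2hh.1 hI2hh.2
  have cX := comp_mul (oddExt (2 * m)) (oddExt m) (oddRestr m) (oddExt (2 * m)) (oddRestr (2 * m))
    Ih2hD Ih2hP (I2hhD * (ThD m + c • 1)⁻¹) (I2hhP * (ThP m + c • 1)⁻¹)
    hREc hIh2h.1 hIh2h.2 cY.1 cY.2
  have cZ := comp_mul (oddExt (2 * m)) (oddExt (2 * m)) (oddRestr (2 * m))
    (oddExt (2 * m)) (oddRestr (2 * m))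
    (ThD (2 * m) + c • 1) (ThP (2 * m) + c • 1)
    (I2hhD * (ThD m + c • 1)⁻¹ * Ih2hD) (I2hhP * (ThP m + c • 1)⁻¹ * Ih2hP)
    hREf hA.1 hA.2 cX.1 cX.2
  have cOne := comp_one (oddExt (2 * m)) (oddRestr (2 * m)) hREf
  have cCGC := comp_sub (oddExt (2 * m)) (oddRestr (2 * m))
    1 (I2hhD * (ThD m + c • 1)⁻¹ * Ih2hD * (ThD (2 * m) + c • 1))
    1 (I2hhP * (ThP m + c • 1)⁻¹ * Ih2hP * (ThP (2 * m) + c • 1))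
    cOne.1 cOne.2 cZ.1 cZ.2
  have cSA := comp_mul (oddExt (2 * m)) (oddExt (2 * m)) (oddRestr (2 * m))
    (oddExt (2 * m)) (oddRestr (2 * m))
    (ThD (2 * m) + c • 1) (ThP (2 * m) + c • 1) SD SP hREf hA.1 hA.2 hS.1 hS.2
  have cSm := comp_sub (oddExt (2 * m)) (oddRestr (2 * m))
    1 (SD * (ThD (2 * m) + c • 1)) 1 (SP * (ThP (2 * m) + c • 1))
    cOne.1 cOne.2 cSA.1 cSA.2
  have cProd := comp_mul (oddExt (2 * m)) (oddExt (2 * m)) (oddRestr (2 * m))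
    (oddExt (2 * m)) (oddRestr (2 * m))
    (1 - SD * (ThD (2 * m) + c • 1)) (1 - SP * (ThP (2 * m) + c • 1))
    (1 - I2hhD * (ThD m + c • 1)⁻¹ * Ih2hD * (ThD (2 * m) + c • 1))
    (1 - I2hhP * (ThP m + c • 1)⁻¹ * Ih2hP * (ThP (2 * m) + c • 1))
    hREf cSm.1 cSm.2 cCGC.1 cCGC.2
  have cBig := comp_sub (oddExt (2 * m)) (oddRestr (2 * m))
    1 ((1 - I2hhD * (ThD m + c • 1)⁻¹ * Ih2hD * (ThD (2 * m) + c • 1)) *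
        (1 - SD * (ThD (2 * m) + c • 1)))
    1 ((1 - I2hhP * (ThP m + c • 1)⁻¹ * Ih2hP * (ThP (2 * m) + c • 1)) *
        (1 - SP * (ThP (2 * m) + c • 1)))
    cOne.1 cOne.2 cProd.1 cProd.2
  have cFinal := comp_mul (oddExt (2 * m)) (oddExt (2 * m)) (oddRestr (2 * m))
    (oddExt (2 * m)) (oddRestr (2 * m))
    (ThD (2 * m) + c • 1)⁻¹ (ThP (2 * m) + c • 1)⁻¹
    (1 - (1 - I2hhD * (ThD m + c • 1)⁻¹ * Ih2hD * (ThD (2 * m) + c • 1)) *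
        (1 - SD * (ThD (2 * m) + c • 1)))
    (1 - (1 - I2hhP * (ThP m + c • 1)⁻¹ * Ih2hP * (ThP (2 * m) + c • 1)) *
        (1 - SP * (ThP (2 * m) + c • 1)))
    hREf cAPinv.1 cAPinv.2 cBig.1 cBig.2
  exact ⟨cFinal.1, cFinal.2⟩
end
end
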